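/- If the matrix A is invertible (rank two), then for all n ∈ ℕ one has u_{2n} = C_1·λ_1^n − C_2·λ_2^n and v_{2n} = C_3·λ_1^n − C_4·λ_2^n. -/

import Mathlib

set_option maxHeartbeats 1000000


open Finset Filter Topology

theorem stmt_14
    (x y a b c d : ℕ → ℝ)
    (hx0 : 0 < x 0) (hy0 : 0 < y 0)
    (hapos : ∀ n, 0 < a n) (hbpos : ∀ n, 0 < b n)
    (hcpos : ∀ n, 0 < c n) (hdpos : ∀ n, 0 < d n)
    (haper : ∀ n, a (n + 2) = a n) (hbper : ∀ n, b (n + 2) = b n)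
    (hcper : ∀ n, c (n + 2) = c n) (hdper : ∀ n, d (n + 2) = d n)
    (hxrec : ∀ n, x (n + 1) = a n / x n + b n / y n)
    (hyrec : ∀ n, y (n + 1) = c n / x n + d n / y n)
    (u v : ℕ → ℝ)
    (hu : ∀ n, u n = (∏ k ∈ Finset.range (n + 1), x k) * ∏ k ∈ Finset.range n, y k)
    (hv : ∀ n, v n = (∏ k ∈ Finset.range n, x k) * ∏ k ∈ Finset.range (n + 1), y k)
    (A : Matrix (Fin 2) (Fin 2) ℝ)
    (hAdef : A = !![a 1 * d 0 + b 0 * b 1, a 0 * b 1 + a 1 * c 0;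
                    b 0 * d 1 + c 1 * d 0, a 0 * d 1 + c 0 * c 1])
    (hA : IsUnit A)
    (D lam1 lam2 : ℝ)
    (hD : D = Real.sqrt ((a 1 * d 0 + b 0 * b 1 - a 0 * d 1 - c 0 * c 1) ^ 2 +
      4 * (a 0 * b 1 + a 1 * c 0) * (b 0 * d 1 + c 1 * d 0)))
    (hlam1 : lam1 = (a 1 * d 0 + b 0 * b 1 + a 0 * d 1 + c 0 * c 1 + D) / 2)
    (hlam2 : lam2 = (a 1 * d 0 + b 0 * b 1 + a 0 * d 1 + c 0 * c 1 - D) / 2)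
    (C1 C2 C3 C4 : ℝ)
    (hC1 : C1 = (a 0 * b 1 + a 1 * c 0) / (lam1 - lam2) *
      ((b 0 * d 1 + c 1 * d 0) / (lam1 - (a 1 * d 0 + b 0 * b 1)) * x 0 + y 0))
    (hC2 : C2 = (a 0 * b 1 + a 1 * c 0) / (lam1 - lam2) *
      ((b 0 * d 1 + c 1 * d 0) / (lam2 - (a 1 * d 0 + b 0 * b 1)) * x 0 + y 0))
    (hC3 : C3 = ((b 0 * d 1 + c 1 * d 0) * x 0 + (lam1 - (a 1 * d 0 + b 0 * b 1)) * y 0) /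
      (lam1 - lam2))
    (hC4 : C4 = ((b 0 * d 1 + c 1 * d 0) * x 0 + (lam2 - (a 1 * d 0 + b 0 * b 1)) * y 0) /
      (lam1 - lam2))
    : ∀ n : ℕ,
      u (2 * n) = C1 * lam1 ^ n - C2 * lam2 ^ n ∧
      v (2 * n) = C3 * lam1 ^ n - C4 * lam2 ^ n := by
  -- abbreviations
  set α := a 1 * d 0 + b 0 * b 1 with hα
  set β := a 0 * b 1 + a 1 * c 0 with hβ
  set γ := b 0 * d 1 + c 1 * d 0 with hγ
  set δ := a 0 * d 1 + c 0 * c 1 with hδ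
  have hβpos : 0 < β := by rw [hβ]; have := hapos 0; have := hapos 1; have := hbpos 1; have := hcpos 0; positivity
  have hγpos : 0 < γ := by rw [hγ]; have := hbpos 0; have := hcpos 1; have := hdpos 0; have := hdpos 1; positivity
  clear_value α β γ δ
  -- positivity of the orbit
  have hxy : ∀ n, 0 < x n ∧ 0 < y n := by
    intro n
    induction n with
    | zero => exact ⟨hx0, hy0⟩
    | succ n ih =>
      obtain ⟨hxn, hyn⟩ := ih
      constructor
      · rw [hxrec]; have := hapos n; have := hbpos n; positivity
      · rw [hyrec]; have := hcpos n; have := hdpos n; positivity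
  -- one-step recurrences for u, v
  have hu' : ∀ n, u (n + 1) = b n * u n + a n * v n := by
    intro n
    have hxn := (hxy n).1.ne'
    have hyn := (hxy n).2.ne'
    rw [hu, hu n, hv n, prod_range_succ (f := x), prod_range_succ (f := x),
      prod_range_succ (f := y), hxrec]
    field_simp
    ring
  have hv' : ∀ n, v (n + 1) = d n * u n + c n * v n := by
    intro n
    have hxn := (hxy n).1.ne'
    have hyn := (hxy n).2.ne'
    rw [hv, hv n, hu n, prod_range_succ (f := y), prod_range_succ (f := y),
      prod_range_succ (f := x), hyrec]
    field_simp
    ring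
  -- periodicity at even/odd indices
  have hper : ∀ (f : ℕ → ℝ), (∀ n, f (n + 2) = f n) → ∀ n, f (2 * n) = f 0 ∧ f (2 * n + 1) = f 1 := by
    intro f hf n
    induction n with
    | zero => exact ⟨rfl, rfl⟩
    | succ n ih =>
      constructor
      · have h1 : 2 * (n + 1) = 2 * n + 2 := by ring
        rw [h1, hf]; exact ih.1
      · have h2 : 2 * (n + 1) + 1 = (2 * n + 1) + 2 := by ring
        rw [h2, hf]; exact ih.2
  -- two-step recurrence at even indices
  have hstep : ∀ n, u (2 * (n + 1)) = α * u (2 * n) + β * v (2 * n) ∧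
      v (2 * (n + 1)) = γ * u (2 * n) + δ * v (2 * n) := by
    intro n
    have h1 : 2 * (n + 1) = (2 * n + 1) + 1 := by ring
    have ha := hper a haper n
    have hb := hper b hbper n
    have hc := hper c hcper n
    have hd := hper d hdper n
    have e1 : u (2 * n + 1) = b 0 * u (2 * n) + a 0 * v (2 * n) := by
      rw [hu', hb.1, ha.1]
    have e2 : v (2 * n + 1) = d 0 * u (2 * n) + c 0 * v (2 * n) := by
      rw [hv', hd.1, hc.1]
    have e3 : u (2 * (n + 1)) = b 1 * u (2 * n + 1) + a 1 * v (2 * n + 1) := by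
      rw [h1, hu', hb.2, ha.2]
    have e4 : v (2 * (n + 1)) = d 1 * u (2 * n + 1) + c 1 * v (2 * n + 1) := by
      rw [h1, hv', hd.2, hc.2]
    rw [e3, e4, e1, e2, hα, hβ, hγ, hδ]
    constructor <;> ring
  -- spectral facts
  have hlam1' : lam1 = (α + δ + D) / 2 := by rw [hlam1, hδ]; ring
  have hlam2' : lam2 = (α + δ - D) / 2 := by rw [hlam2, hδ]; ring
  have hDsq : D ^ 2 = (α - δ) ^ 2 + 4 * β * γ := by
    rw [hD, Real.sq_sqrt (by nlinarith [sq_nonneg (α - a 0 * d 1 - c 0 * c 1), mul_pos hβpos hγpos]), hδ]; ring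
  have hDpos : 0 < D := by
    rw [hD]; apply Real.sqrt_pos.mpr; nlinarith [sq_nonneg (α - a 0 * d 1 - c 0 * c 1), mul_pos hβpos hγpos]
  have habs : |α - δ| < D := by
    apply abs_lt_of_sq_lt_sq _ hDpos.le
    nlinarith [mul_pos hβpos hγpos]
  obtain ⟨habs1, habs2⟩ := abs_lt.mp habs
  have h1α : lam1 - α ≠ 0 := by
    have : 0 < lam1 - α := by rw [hlam1']; linarith
    exact this.ne'
  have h2α : lam2 - α ≠ 0 := by
    have : lam2 - α < 0 := by rw [hlam2']; linarith
    exact this.ne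
  have hdiff : lam1 - lam2 = D := by rw [hlam1', hlam2']; ring
  have h12 : lam1 - lam2 ≠ 0 := by rw [hdiff]; exact hDpos.ne'
  have hprod : (lam1 - α) * (lam2 - α) = -(β * γ) := by
    rw [hlam1', hlam2']
    linear_combination (-1 / 4) * hDsq
  have hchar1 : lam1 ^ 2 = (α + δ) * lam1 - (α * δ - β * γ) := by
    rw [hlam1']
    linear_combination hDsq / 4
  have hchar2 : lam2 ^ 2 = (α + δ) * lam2 - (α * δ - β * γ) := by
    rw [hlam2']
    linear_combination hDsq / 4
  -- eigenvector identities
  have hs1 : C1 * lam1 = α * C1 + β * C3 := by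
    rw [hC1, hC3]; field_simp [h12, h1α]; ring
  have hs2 : C2 * lam2 = α * C2 + β * C4 := by
    rw [hC2, hC4]; field_simp [h12, h2α]; ring
  have hs3 : C3 * lam1 = γ * C1 + δ * C3 := by
    rw [hC1, hC3]
    field_simp [h12, h1α]
    linear_combination (γ * x 0 + (lam1 - α) * y 0) * hchar1
  have hs4 : C4 * lam2 = γ * C2 + δ * C4 := by
    rw [hC2, hC4]
    field_simp [h12, h2α]
    linear_combination (γ * x 0 + (lam2 - α) * y 0) * hchar2
  -- initial conditions
  have hi1 : C1 - C2 = x 0 := by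
    rw [hC1, hC2]
    field_simp [h12, h1α, h2α]
    linear_combination (-(x 0 * (lam1 - lam2))) * hprod
  have hi2 : C3 - C4 = y 0 := by
    rw [hC3, hC4]
    field_simp [h12]
    ring
  -- main induction
  intro n
  induction n with
  | zero =>
    constructor
    · rw [hu]; simp [prod_range_succ]
      linarith [hi1]
    · rw [hv]; simp [prod_range_succ]
      linarith [hi2]
  | succ n ih =>
    obtain ⟨ihu, ihv⟩ := ih
    obtain ⟨hsu, hsv⟩ := hstep n
    constructor
    · rw [hsu, ihu, ihv, pow_succ, pow_succ]
      linear_combination lam2 ^ n * hs2 - lam1 ^ n * hs1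
    · rw [hsv, ihu, ihv, pow_succ, pow_succ]
      linear_combination lam2 ^ n * hs4 - lam1 ^ n * hs3
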